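/- If a permutation p of length n satisfies |D_k(p)| = C(n,k), then |D_j(p)| = C(n,j) for all 1 ≤ j ≤ k. -/

import Mathlib

open Finset

/-- `del p i`: delete the `i`-th entry of `p` and relabel order-isomorphically. -/
def del {n : ℕ} (p : Equiv.Perm (Fin (n + 1))) (i : Fin (n + 1)) : Equiv.Perm (Fin n) :=
  (Tuple.sort fun j => p (i.succAbove j))⁻¹

/-- `D1 p`: the set of `(n-1)`-patterns of `p`. -/
def D1 {n : ℕ} (p : Equiv.Perm (Fin (n + 1))) : Finset (Equiv.Perm (Fin n)) :=
  Finset.univ.image (del p)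

/-- `ins q j k`: insert the value `k - 1/2` just left of position `j` and relabel. -/
def ins {n : ℕ} (q : Equiv.Perm (Fin n)) (j k : Fin (n + 1)) : Equiv.Perm (Fin (n + 1)) :=
  (finSuccEquiv' j).trans ((Equiv.optionCongr q).trans (finSuccEquiv' k).symm)

/-- `C p`: the number of bonds of `p` (adjacent positions with values differing by 1). -/
def C {n : ℕ} (p : Equiv.Perm (Fin (n + 1))) : ℕ :=
  (Finset.univ.filter fun i : Fin n =>
    Nat.dist (p i.castSucc).val (p i.succ).val = 1).card

/-- minimum gap of an injective word `f`, via the taxicab metric on (index, value). -/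
noncomputable def mgF {n : ℕ} (f : Fin n → ℕ) : ℕ :=
  sInf {m : ℕ | ∃ i j : Fin n, i < j ∧ Nat.dist i.val j.val + Nat.dist (f i) (f j) = m}

/-- minimum gap of a permutation. -/
noncomputable def mg {n : ℕ} (p : Equiv.Perm (Fin n)) : ℕ := mgF fun i => (p i).val

/-- the span of entries `p i` and `p j`: indices of entries strictly between them
horizontally or vertically. -/
def span {n : ℕ} (p : Equiv.Perm (Fin n)) (i j : Fin n) : Finset (Fin n) :=
  Finset.univ.filter fun m =>
    (i < m ∧ m < j) ∨ (min (p i) (p j) < p m ∧ p m < max (p i) (p j))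

/-- the pattern of `p` after deleting the entries at positions in `S`, encoded as the
list of (0-based) ranks of the remaining entries in positional order. -/
def patList {n : ℕ} (p : Equiv.Perm (Fin n)) (S : Finset (Fin n)) : List ℕ :=
  let l := (Sᶜ.sort (· ≤ ·)).map fun t => (p t).val
  l.map fun v => (l.filter fun w => w < v).length

/-- `Dk p k`: the set of distinct `(n-k)`-patterns of `p`. -/
def Dk {n : ℕ} (p : Equiv.Perm (Fin n)) (k : ℕ) : Finset (List ℕ) :=
  (Finset.univ.filter fun S : Finset (Fin n) => S.card = k).image (patList p)


/-- abstract pattern of a list of naturals -/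
def pat (l : List ℕ) : List ℕ := l.map fun v => (l.filter fun w => w < v).length

lemma pat_length (l : List ℕ) : (pat l).length = l.length := by simp [pat]

lemma filter_length_eq_sum (l : List ℕ) (v : ℕ) :
    (l.filter fun w => w < v).length
      = ∑ b ∈ Finset.range l.length, if l.getD b 0 < v then 1 else 0 := by
  induction l with
  | nil => simp
  | cons a l ih =>
    rw [List.length_cons, Finset.sum_range_succ']
    simp only [List.filter_cons, List.getD_cons_succ, List.getD_cons_zero]
    by_cases h : a < v <;> simp [h, ih, Nat.add_comm]

lemma pat_getD (l : List ℕ) (a : ℕ) (ha : a < l.length) :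
    (pat l).getD a 0
      = ∑ b ∈ Finset.range l.length, if l.getD b 0 < l.getD a 0 then 1 else 0 := by
  have ha' : a < (pat l).length := by rwa [pat_length]
  rw [List.getD_eq_getElem _ _ ha', List.getD_eq_getElem _ _ ha]
  simp only [pat, List.getElem_map]
  rw [filter_length_eq_sum]

lemma rank_lt_rank (l : List ℕ) {a b : ℕ} (ha : a < l.length) (hb : b < l.length)
    (hab : l.getD a 0 < l.getD b 0) :
    (pat l).getD a 0 < (pat l).getD b 0 := by
  rw [pat_getD l a ha, pat_getD l b hb]
  apply Finset.sum_lt_sum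
  · intro i _
    split_ifs with h1 h2
    · exact le_refl _
    · exact absurd (lt_trans h1 hab) h2
    · exact Nat.zero_le _
    · exact le_refl _
  · refine ⟨a, Finset.mem_range.mpr ha, ?_⟩
    rw [if_neg (lt_irrefl _), if_pos hab]
    exact Nat.one_pos

lemma getD_injOn (l : List ℕ) (hl : l.Nodup) {a b : ℕ} (ha : a < l.length)
    (hb : b < l.length) (h : l.getD a 0 = l.getD b 0) : a = b := by
  rw [List.getD_eq_getElem _ _ ha, List.getD_eq_getElem _ _ hb] at h
  have := List.Nodup.idxOf_getElem hl a ha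
  rw [h, List.Nodup.idxOf_getElem hl b hb] at this
  exact this.symm

lemma pat_lt_of_lt {l₁ l₂ : List ℕ} (h₂ : l₂.Nodup)
    (hlen : l₁.length = l₂.length) (hpat : pat l₁ = pat l₂)
    {a b : ℕ} (ha : a < l₁.length) (hb : b < l₁.length)
    (h : l₁.getD a 0 < l₁.getD b 0) : l₂.getD a 0 < l₂.getD b 0 := by
  have ha₂ : a < l₂.length := hlen ▸ ha
  have hb₂ : b < l₂.length := hlen ▸ hb
  have hr : (pat l₂).getD a 0 < (pat l₂).getD b 0 := by
    rw [← hpat]; exact rank_lt_rank l₁ ha hb h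
  rcases lt_trichotomy (l₂.getD a 0) (l₂.getD b 0) with h' | h' | h'
  · exact h'
  · exact absurd (getD_injOn l₂ h₂ ha₂ hb₂ h' ▸ hr) (lt_irrefl _)
  · exact absurd (rank_lt_rank l₂ hb₂ ha₂ h') (not_lt.mpr (le_of_lt hr))

lemma pat_lt_iff {l₁ l₂ : List ℕ} (h₁ : l₁.Nodup) (h₂ : l₂.Nodup)
    (hlen : l₁.length = l₂.length) (hpat : pat l₁ = pat l₂)
    {a b : ℕ} (ha : a < l₁.length) (hb : b < l₁.length) :
    l₁.getD a 0 < l₁.getD b 0 ↔ l₂.getD a 0 < l₂.getD b 0 :=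
  ⟨pat_lt_of_lt h₂ hlen hpat ha hb,
   pat_lt_of_lt h₁ hlen.symm hpat.symm (hlen ▸ ha) (hlen ▸ hb)⟩

lemma getD_eraseIdx (l : List ℕ) (i b : ℕ) (hb : b < (l.eraseIdx i).length) :
    (l.eraseIdx i).getD b 0 = if b < i then l.getD b 0 else l.getD (b + 1) 0 := by
  by_cases hil : i < l.length
  case neg =>
    rw [List.eraseIdx_eq_self.mpr (not_lt.mp hil)] at hb ⊢
    rw [if_pos (by omega)]
  have hlen : (l.eraseIdx i).length = l.length - 1 := by
    rw [List.length_eraseIdx, if_pos hil]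
  rw [List.getD_eq_getElem _ _ hb, List.getElem_eraseIdx]
  split_ifs with h
  · have hbl : b < l.length := by omega
    rw [List.getD_eq_getElem _ _ hbl]
  · have hbl : b + 1 < l.length := by omega
    rw [List.getD_eq_getElem _ _ hbl]

lemma pat_eraseIdx {l₁ l₂ : List ℕ} (h₁ : l₁.Nodup) (h₂ : l₂.Nodup)
    (hlen : l₁.length = l₂.length) (hpat : pat l₁ = pat l₂) (i : ℕ) :
    pat (l₁.eraseIdx i) = pat (l₂.eraseIdx i) := by
  by_cases hil₁ : i < l₁.length
  case neg =>
    rw [List.eraseIdx_eq_self.mpr (not_lt.mp hil₁),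
        List.eraseIdx_eq_self.mpr (not_lt.mp (hlen ▸ hil₁))]
    exact hpat
  have helen : (l₁.eraseIdx i).length = (l₂.eraseIdx i).length := by
    rw [List.length_eraseIdx, List.length_eraseIdx, hlen]
  apply List.ext_getElem
  · rw [pat_length, pat_length, helen]
  · intro a ha₁ ha₂
    rw [pat_length] at ha₁ ha₂
    rw [← List.getD_eq_getElem _ 0 (by rwa [pat_length]),
        ← List.getD_eq_getElem _ 0 (by rwa [pat_length]),
        pat_getD _ a ha₁, pat_getD _ a ha₂, helen]
    refine Finset.sum_congr rfl fun b hb => ?_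
    have hb₂ : b < (l₂.eraseIdx i).length := Finset.mem_range.mp hb
    have hb₁ : b < (l₁.eraseIdx i).length := helen ▸ hb₂
    have ha₂' : a < (l₂.eraseIdx i).length := helen ▸ ha₁
    rw [getD_eraseIdx _ _ _ hb₁, getD_eraseIdx _ _ _ hb₂,
        getD_eraseIdx _ _ _ ha₁, getD_eraseIdx _ _ _ ha₂']
    have hlen₁ : (l₁.eraseIdx i).length = l₁.length - 1 := by
      rw [List.length_eraseIdx, if_pos hil₁]
    have key : ∀ x y : ℕ, x < l₁.length → y < l₁.length →
        ((l₁.getD x 0 < l₁.getD y 0) = (l₂.getD x 0 < l₂.getD y 0)) := fun x y hx hy =>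
      propext (pat_lt_iff h₁ h₂ hlen hpat hx hy)
    refine if_congr ?_ rfl rfl
    split_ifs with hbi hai hai
    · rw [key b a (by omega) (by omega)]
    · rw [key b (a+1) (by omega) (by omega)]
    · rw [key (b+1) a (by omega) (by omega)]
    · rw [key (b+1) (a+1) (by omega) (by omega)]


lemma patList_eq {n : ℕ} (p : Equiv.Perm (Fin n)) (S : Finset (Fin n)) :
    patList p S = pat ((Sᶜ.sort (· ≤ ·)).map fun t => (p t).val) := rfl

lemma map_eraseIdx' {α β : Type*} (f : α → β) (l : List α) (i : ℕ) :
    (l.eraseIdx i).map f = (l.map f).eraseIdx i := by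
  simp [List.eraseIdx_eq_take_drop_succ, List.map_take, List.map_drop]

lemma sort_erase {n : ℕ} (s : Finset (Fin n)) (a : Fin n) :
    (s.erase a).sort (· ≤ ·) = (s.sort (· ≤ ·)).erase a := by
  refine List.Perm.eq_of_pairwise' (Finset.pairwise_sort _ _)
    ((Finset.pairwise_sort s (·≤·)).sublist ((s.sort (· ≤ ·)).erase_sublist (a := a))) ?_
  rw [← Multiset.coe_eq_coe, Finset.sort_eq, ← Multiset.coe_erase, Finset.sort_eq,
    Finset.erase_val]

lemma mapped_nodup {n : ℕ} (p : Equiv.Perm (Fin n)) (S : Finset (Fin n)) :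
    ((Sᶜ.sort (· ≤ ·)).map fun t => (p t).val).Nodup :=
  (Finset.sort_nodup _ _).map fun a b hab =>
    p.injective (Fin.val_injective hab)

lemma patList_length {n : ℕ} (p : Equiv.Perm (Fin n)) (S : Finset (Fin n)) :
    (patList p S).length = Sᶜ.card := by
  simp [patList]

lemma step {n : ℕ} (p : Equiv.Perm (Fin n)) (S T : Finset (Fin n)) (i : ℕ)
    (hS : i < (Sᶜ.sort (· ≤ ·)).length) (hT : i < (Tᶜ.sort (· ≤ ·)).length)
    (hpat : patList p S = patList p T) :
    patList p (insert ((Sᶜ.sort (· ≤ ·))[i]'hS) S)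
      = patList p (insert ((Tᶜ.sort (· ≤ ·))[i]'hT) T) := by
  have hlen : ((Sᶜ.sort (· ≤ ·)).map fun t => ((p t : Fin n) : ℕ)).length
      = ((Tᶜ.sort (· ≤ ·)).map fun t => ((p t : Fin n) : ℕ)).length := by
    have := congrArg List.length hpat
    rw [patList_eq, patList_eq, pat_length, pat_length] at this
    exact this
  rw [patList_eq, patList_eq, Finset.compl_insert, Finset.compl_insert,
    sort_erase, sort_erase,
    (Finset.sort_nodup Sᶜ (· ≤ ·)).erase_getElem i hS,
    (Finset.sort_nodup Tᶜ (· ≤ ·)).erase_getElem i hT,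
    map_eraseIdx', map_eraseIdx']
  exact pat_eraseIdx (mapped_nodup p S) (mapped_nodup p T) hlen
    (by rw [← patList_eq, ← patList_eq]; exact hpat) i


theorem stmt13 {n k : ℕ} (hkn : k < n) (p : Equiv.Perm (Fin n))
    (h : (Dk p k).card = n.choose k) :
    ∀ j : ℕ, 1 ≤ j → j ≤ k → (Dk p j).card = n.choose j := by
  intro j _ hjk
  have hfc : ∀ m : ℕ,
      (Finset.univ.filter fun S : Finset (Fin n) => S.card = m).card = n.choose m := by
    intro m
    rw [← Finset.powerset_univ, ← Finset.powersetCard_eq_filter, Finset.card_powersetCard,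
      Finset.card_univ, Fintype.card_fin]
  have hinjk : Set.InjOn (patList p)
      ↑(Finset.univ.filter fun S : Finset (Fin n) => S.card = k) :=
    Finset.card_image_iff.mp (h.trans (hfc k).symm)
  have grow : ∀ t : ℕ, t < k → ∀ S T : Finset (Fin n), S.card = t → T.card = t →
      patList p S = patList p T → (∃ x, x ∈ S ∧ x ∉ T) →
      ∃ S' T' : Finset (Fin n), S'.card = t + 1 ∧ T'.card = t + 1 ∧
        patList p S' = patList p T' ∧ ∃ x, x ∈ S' ∧ x ∉ T' := by
    intro t ht S T hS hT hpat ⟨x, hxS, hxT⟩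
    have hlenS : (Sᶜ.sort (· ≤ ·)).length = n - t := by
      rw [Finset.length_sort, Finset.card_compl, Fintype.card_fin, hS]
    have hlenT : (Tᶜ.sort (· ≤ ·)).length = n - t := by
      rw [Finset.length_sort, Finset.card_compl, Fintype.card_fin, hT]
    have hxmem : x ∈ Tᶜ.sort (· ≤ ·) := (Finset.mem_sort _).mpr (Finset.mem_compl.mpr hxT)
    obtain ⟨r, hr, hxr⟩ := List.mem_iff_getElem.mp hxmem
    set i : ℕ := if r = 0 then 1 else 0 with hidef
    have h2nt : 2 ≤ n - t := by omega
    have hir : i ≠ r := by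
      rcases Nat.eq_zero_or_pos r with h0 | h0
      · simp only [hidef, if_pos h0]; omega
      · simp only [hidef, if_neg (Nat.pos_iff_ne_zero.mp h0)]; omega
    have hin : i < n - t := by
      rcases Nat.eq_zero_or_pos r with h0 | h0
      · simp only [hidef, if_pos h0]; omega
      · simp only [hidef, if_neg (Nat.pos_iff_ne_zero.mp h0)]; omega
    have hiS : i < (Sᶜ.sort (· ≤ ·)).length := by omega
    have hiT : i < (Tᶜ.sort (· ≤ ·)).length := by omega
    refine ⟨insert ((Sᶜ.sort (· ≤ ·))[i]'hiS) S, insert ((Tᶜ.sort (· ≤ ·))[i]'hiT) T,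
      ?_, ?_, step p S T i hiS hiT hpat, x, Finset.mem_insert_of_mem hxS, ?_⟩
    · rw [Finset.card_insert_of_notMem
        (Finset.mem_compl.mp ((Finset.mem_sort _).mp (List.getElem_mem hiS))), hS]
    · rw [Finset.card_insert_of_notMem
        (Finset.mem_compl.mp ((Finset.mem_sort _).mp (List.getElem_mem hiT))), hT]
    · intro hmem
      rcases Finset.mem_insert.mp hmem with heq | hmemT
      · apply hir
        have h1 := List.Nodup.idxOf_getElem (Finset.sort_nodup Tᶜ (· ≤ ·)) i hiT
        have h2 := List.Nodup.idxOf_getElem (Finset.sort_nodup Tᶜ (· ≤ ·)) r hr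
        have h3 : (Tᶜ.sort (· ≤ ·))[r]'hr = (Tᶜ.sort (· ≤ ·))[i]'hiT := hxr.trans heq
        rw [h3] at h2
        exact h1.symm.trans h2
      · exact hxT hmemT
  have reach : ∀ d t : ℕ, t + d = k → ∀ S T : Finset (Fin n), S.card = t → T.card = t →
      patList p S = patList p T → (∃ x, x ∈ S ∧ x ∉ T) → False := by
    intro d
    induction d with
    | zero =>
      intro t htk S T hS hT hpat ⟨x, hxS, hxT⟩
      have hSk : S.card = k := by omega
      have hTk : T.card = k := by omega
      have := hinjk (by simp [hSk]) (by simp [hTk]) hpat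
      rw [this] at hxS
      exact hxT hxS
    | succ d ih =>
      intro t htk S T hS hT hpat hx
      obtain ⟨S', T', hS', hT', hpat', hx'⟩ := grow t (by omega) S T hS hT hpat hx
      exact ih (t + 1) (by omega) S' T' hS' hT' hpat' hx'
  have hinjj : Set.InjOn (patList p)
      ↑(Finset.univ.filter fun S : Finset (Fin n) => S.card = j) := by
    intro S hS T hT hpat
    simp only [Finset.coe_filter, Set.mem_setOf_eq, Finset.mem_univ, true_and] at hS hT
    by_contra hne
    have hST : ∃ x, x ∈ S ∧ x ∉ T := by
      by_contra hc
      push_neg at hc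
      exact hne (Finset.eq_of_subset_of_card_le (fun x hx => hc x hx) (by omega))
    exact reach (k - j) j (by omega) S T hS hT hpat hST
  rw [Dk, Finset.card_image_of_injOn hinjj, hfc j]
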